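/- Let K be a positive integer, let λ₁, …, λ_K ≥ 0 with Σ_{k=1}^K λ_k = 1, let 0 < L ≤ U, and let x₁, …, x_K ∈ ℝ with L ≤ x_k ≤ U for all k. Then Σ_{k=1}^K λ_k·x_k ≤ (Σ_{k=1}^K λ_k·(U/L)^{1−λ_k}) · Π_{k=1}^K x_k^{λ_k}. -/

import Mathlib

open Finset Real

/-- Bound on the weighted arithmetic mean in terms of the weighted
geometric mean and the ratio `U/L`. -/
theorem stmt8 (K : ℕ) (hK : 0 < K)
    (lam : Fin K → ℝ) (hlam : ∀ k, 0 ≤ lam k) (hsum : ∑ k, lam k = 1)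
    (L Upp : ℝ) (hL : 0 < L) (hLU : L ≤ Upp)
    (x : Fin K → ℝ) (hx : ∀ k, L ≤ x k ∧ x k ≤ Upp) :
    ∑ k, lam k * x k ≤
      (∑ k, lam k * (Upp / L) ^ (1 - lam k)) * ∏ k, x k ^ lam k := by
  have hxpos : ∀ k, 0 < x k := fun k => hL.trans_le (hx k).1
  have hlam1 : ∀ k, lam k ≤ 1 := by
    intro k
    rw [← hsum]
    exact Finset.single_le_sum (fun j _ => hlam j) (Finset.mem_univ k)
  have key : ∀ k, x k ≤ (Upp / L) ^ (1 - lam k) * ∏ j, x j ^ lam j := by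
    intro k
    have h1 : x k ^ lam k * L ^ (1 - lam k) ≤ ∏ j, x j ^ lam j := by
      have := Finset.mul_prod_erase Finset.univ (fun j => x j ^ lam j)
        (Finset.mem_univ k)
      rw [← this]
      have h2 : L ^ (1 - lam k) ≤ ∏ j ∈ Finset.univ.erase k, x j ^ lam j := by
        have hsum' : ∑ j ∈ Finset.univ.erase k, lam j = 1 - lam k := by
          have := Finset.add_sum_erase Finset.univ lam (Finset.mem_univ k)
          rw [hsum] at this; linarith
        calc L ^ (1 - lam k) = ∏ j ∈ Finset.univ.erase k, L ^ lam j := by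
              rw [← Real.rpow_sum_of_pos hL, hsum']
          _ ≤ ∏ j ∈ Finset.univ.erase k, x j ^ lam j := by
              apply Finset.prod_le_prod
              · intro j _; exact Real.rpow_nonneg hL.le _
              · intro j _; exact Real.rpow_le_rpow hL.le (hx j).1 (hlam j)
      exact mul_le_mul_of_nonneg_left h2 (Real.rpow_nonneg (hxpos k).le _)
    have h3 : x k ≤ Upp ^ (1 - lam k) * x k ^ lam k := by
      have : x k = x k ^ (1 - lam k) * x k ^ lam k := by
        rw [← Real.rpow_add (hxpos k)]; simp
      nth_rewrite 1 [this]
      exact mul_le_mul_of_nonneg_right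
        (Real.rpow_le_rpow (hxpos k).le (hx k).2 (sub_nonneg.mpr (hlam1 k)))
        (Real.rpow_nonneg (hxpos k).le _)
    calc x k ≤ Upp ^ (1 - lam k) * x k ^ lam k := h3
      _ = (Upp / L) ^ (1 - lam k) * (x k ^ lam k * L ^ (1 - lam k)) := by
          rw [Real.div_rpow (hL.trans_le hLU).le hL.le]
          field_simp
      _ ≤ (Upp / L) ^ (1 - lam k) * ∏ j, x j ^ lam j := by
          exact mul_le_mul_of_nonneg_left h1
            (Real.rpow_nonneg (div_nonneg (hL.trans_le hLU).le hL.le) _)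
  calc ∑ k, lam k * x k
      ≤ ∑ k, lam k * ((Upp / L) ^ (1 - lam k) * ∏ j, x j ^ lam j) := by
        apply Finset.sum_le_sum
        intro k _
        exact mul_le_mul_of_nonneg_left (key k) (hlam k)
    _ = (∑ k, lam k * (Upp / L) ^ (1 - lam k)) * ∏ k, x k ^ lam k := by
        rw [Finset.sum_mul]; simp [mul_assoc]
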